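/- For every integer m ≥ 1 and 1 ≤ k ≤ m, the probability P{W_{m,m} = k} = 2^k · C(2m-k-1, m-1) · (k/m) / C(2m, m), and for fixed x > 0, if k = k(m) with k/√m → x as m → ∞, then m^{1/2} · P{W_{m,m} = k} → (x/2) e^{-x²/4}; i.e. W_{m,m}/√m converges in distribution to a Rayleigh(√2) random variable. -/

import Mathlib

open Filter

/-- The pmf of `W_{m,m}`: `P{W_{m,m}=k} = 2^k C(2m-k-1, m-1) k / (m C(2m,m))`. -/
noncomputable def Wmmpmf (m k : ℕ) : ℝ :=
  2 ^ k * Nat.choose (2 * m - k - 1) (m - 1) * k / (m * Nat.choose (2 * m) m)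

open Finset Nat in
lemma n0 (m k : ℕ) (hm : 1 ≤ m) (hk : k ≤ m) :
    m * (2*m - k - 1).choose m + k * (2*m - k - 1).choose (m-1)
      = m * (2*m - k - 1).choose (m-1) := by
  have h := Nat.choose_succ_right_eq (2*m - k - 1) (m-1)
  have e1 : m - 1 + 1 = m := by omega
  have e2 : 2*m - k - 1 - (m - 1) = m - k := by omega
  rw [e1, e2] at h
  have : (m - k) + k = m := by omega
  nlinarith [h]

open Finset Nat in
lemma part1 (m k : ℕ) (hm : 1 ≤ m) (hk1 : 1 ≤ k) (hk : k ≤ m) :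
    ((2 ^ k * Nat.choose (2 * m - k) m : ℝ)
        - 2 ^ (k + 1) * Nat.choose (2 * m - k - 1) m) / Nat.choose (2 * m) m
      = Wmmpmf m k := by
  have hC : (0:ℝ) < (2*m).choose m := by
    exact_mod_cast Nat.cast_pos.mpr (Nat.choose_pos (by omega))
  have hm0 : (0:ℝ) < m := by exact_mod_cast hm
  have hp : (2*m - k).choose m = (2*m - k - 1).choose (m-1) + (2*m - k - 1).choose m := by
    have h := Nat.choose_succ_succ (2*m - k - 1) (m-1)
    have e : 2*m - k - 1 + 1 = 2*m - k := by omega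
    have e2 : m - 1 + 1 = m := by omega
    simp only [Nat.succ_eq_add_one] at h
    rw [e, e2] at h; exact h
  have h0 := n0 m k hm hk
  rw [Wmmpmf, div_eq_div_iff (ne_of_gt hC) (by positivity)]
  have h0' : (m:ℝ) * (2*m - k - 1).choose m + k * (2*m - k - 1).choose (m-1)
      = m * (2*m - k - 1).choose (m-1) := by exact_mod_cast h0
  have hp' : ((2*m - k).choose m : ℝ) = (2*m - k - 1).choose (m-1) + (2*m - k - 1).choose m := by
    exact_mod_cast hp
  rw [hp']
  linear_combination (-(2:ℝ)^k * ((2*m).choose m : ℝ)) * h0'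

open Finset Nat in
lemma n1r (m k : ℕ) (hm : 1 ≤ m) (hk : k ≤ m) :
    ((2*m - k - 1).choose (m-1) : ℝ) * (2*m).descFactorial (k+1)
      = (2*m).choose m * m * m.descFactorial k := by
  have e1 : m - 1 ≤ 2*m - k - 1 := by omega
  have c1 := Nat.cast_choose (K := ℝ) e1
  have c2 := Nat.cast_choose (K := ℝ) (show m ≤ 2*m by omega)
  have f1 : ((m-1)! : ℝ) ≠ 0 := by positivity
  have f2 : ((m-k)! : ℝ) ≠ 0 := by positivity
  have f3 : ((2*m - k - 1)! : ℝ) ≠ 0 := by positivity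
  have f4 : ((m)! : ℝ) ≠ 0 := by positivity
  have d1 : ((2*m).descFactorial (k+1) : ℝ) = (2*m)! / (2*m - k - 1)! := by
    have h := Nat.factorial_mul_descFactorial (show k+1 ≤ 2*m by omega)
    have e : 2*m - (k+1) = 2*m - k - 1 := by omega
    rw [e] at h
    have h' : ((2*m - k - 1)! : ℝ) * (2*m).descFactorial (k+1) = (2*m)! := by exact_mod_cast h
    rw [eq_div_iff f3]; linarith
  have d2 : ((m).descFactorial k : ℝ) = m ! / (m - k)! := by
    have h := Nat.factorial_mul_descFactorial hk
    have h' : ((m-k)! : ℝ) * m.descFactorial k = m ! := by exact_mod_cast h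
    rw [eq_div_iff f2]; linarith
  have e2 : 2*m - k - 1 - (m - 1) = m - k := by omega
  have e3 : 2*m - m = m := by omega
  rw [e2] at c1
  rw [e3] at c2
  rw [c1, c2, d1, d2]
  have hE : (m ! : ℝ) = m * (m-1)! := by
    rw [← Nat.mul_factorial_pred (by omega : m ≠ 0)]; push_cast; ring
  field_simp
  rw [hE]; ring

open Finset Nat in
lemma prod_form (m k : ℕ) (hm : 1 ≤ m) (hk : k ≤ m) :
    Wmmpmf m k = (k:ℝ)/(2*(m:ℝ) - k)
      * ∏ j ∈ Finset.range k, ((2*(m:ℝ) - 2*j)/(2*(m:ℝ) - j)) := by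
  have hnum : ∏ j ∈ Finset.range k, (2*(m:ℝ) - 2*j) = 2^k * (m.descFactorial k : ℝ) := by
    calc ∏ j ∈ Finset.range k, (2*(m:ℝ) - 2*j)
        = ∏ j ∈ Finset.range k, (2*((m:ℝ) - j)) := Finset.prod_congr rfl (fun j _ => by ring)
      _ = 2^k * ∏ j ∈ Finset.range k, ((m:ℝ) - j) := by
          rw [Finset.prod_mul_distrib, Finset.prod_const, card_range]
      _ = 2^k * ∏ j ∈ Finset.range k, ((m - j : ℕ) : ℝ) := by
          refine congrArg _ (Finset.prod_congr rfl (fun j hj => ?_))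
          rw [Nat.cast_sub (le_of_lt (lt_of_lt_of_le (mem_range.mp hj) hk))]
      _ = 2^k * (m.descFactorial k : ℝ) := by
          rw [← Nat.cast_prod, Nat.descFactorial_eq_prod_range]
  have hden : ∏ j ∈ Finset.range k, (2*(m:ℝ) - j) = ((2*m).descFactorial k : ℝ) := by
    calc ∏ j ∈ Finset.range k, (2*(m:ℝ) - j)
        = ∏ j ∈ Finset.range k, ((2*m - j : ℕ) : ℝ) := by
          refine Finset.prod_congr rfl (fun j hj => ?_)
          rw [Nat.cast_sub (by have := mem_range.mp hj; omega : j ≤ 2*m)]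
          push_cast; ring
      _ = ((2*m).descFactorial k : ℝ) := by
          rw [← Nat.cast_prod, Nat.descFactorial_eq_prod_range]
  have h := n1r m k hm hk
  rw [Nat.descFactorial_succ] at h
  have e : ((2*m - k : ℕ) : ℝ) = 2*(m:ℝ) - k := by
    rw [Nat.cast_sub (by omega : k ≤ 2*m)]; push_cast; ring
  push_cast [e] at h
  have hd2m : (0:ℝ) < ((2*m).descFactorial k : ℝ) := by
    have : 0 < (2*m).descFactorial k :=
      Nat.pos_of_ne_zero (fun hz => by have := Nat.descFactorial_eq_zero_iff_lt.mp hz; omega)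
    exact_mod_cast this
  have hC2 : (0:ℝ) < ((2*m).choose m : ℝ) := by
    exact_mod_cast Nat.choose_pos (by omega : m ≤ 2*m)
  have hm0 : (0:ℝ) < (m:ℝ) := by exact_mod_cast hm
  have h2mk : (0:ℝ) < 2*(m:ℝ) - k := by
    have : (k:ℝ) ≤ m := by exact_mod_cast hk
    linarith
  rw [Wmmpmf, Finset.prod_div_distrib, hnum, hden]
  have h2mk' : (m:ℝ)*2 - k ≠ 0 := (by linarith : (0:ℝ) < m*2 - k).ne'
  field_simp
  linear_combination (k:ℝ) * h

open Finset Nat in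
lemma part2 (x : ℝ) (hx : 0 < x) (k : ℕ → ℕ)
    (h1 : Tendsto (fun m : ℕ => (k m : ℝ) / Real.sqrt m) atTop (nhds x)) :
    Tendsto (fun m : ℕ => Real.sqrt m * Wmmpmf m (k m)) atTop
      (nhds (x / 2 * Real.exp (-x ^ 2 / 4))) := by
  -- basic limits
  have hsq : Tendsto (fun m : ℕ => Real.sqrt m) atTop atTop := by
    apply tendsto_atTop_atTop.mpr
    intro b
    refine ⟨Nat.ceil ((max b 0)^2), fun m hm => ?_⟩
    have hle : (max b 0)^2 ≤ (m:ℝ) := le_trans (Nat.le_ceil _) (by exact_mod_cast hm)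
    calc b ≤ max b 0 := le_max_left _ _
      _ = Real.sqrt ((max b 0)^2) := (Real.sqrt_sq (le_max_right _ _)).symm
      _ ≤ Real.sqrt m := Real.sqrt_le_sqrt hle
  have hinv : Tendsto (fun m : ℕ => (Real.sqrt m)⁻¹) atTop (nhds 0) :=
    hsq.inv_tendsto_atTop
  have hmulself : ∀ m : ℕ, Real.sqrt m * Real.sqrt m = m := fun m =>
    Real.mul_self_sqrt (by positivity)
  have hkm : Tendsto (fun m : ℕ => (k m : ℝ)/m) atTop (nhds 0) := by
    have := h1.mul hinv
    rw [mul_zero] at this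
    refine this.congr (fun m => ?_)
    rcases Nat.eq_zero_or_pos m with h | h
    · simp [h]
    · have hs : Real.sqrt m ≠ 0 := by positivity
      field_simp
      rw [Real.sq_sqrt (Nat.cast_nonneg _)]
  have hkm2 : Tendsto (fun m : ℕ => (k m : ℝ)*((k m : ℝ)-1)/m) atTop (nhds (x^2)) := by
    have := h1.mul (h1.sub hinv)
    rw [sub_zero] at this
    have hval : x * x = x ^ 2 := by ring
    rw [hval] at this
    refine this.congr (fun m => ?_)
    rcases Nat.eq_zero_or_pos m with h | h
    · simp [h]
    · have hs : Real.sqrt m ≠ 0 := by positivity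
      field_simp
      rw [Real.sq_sqrt (Nat.cast_nonneg _)]; ring
  -- eventual structural facts
  have hev : ∀ᶠ m : ℕ in atTop, 1 ≤ m ∧ 1 ≤ k m ∧ k m < m := by
    have hev1 : ∀ᶠ m : ℕ in atTop, (k m:ℝ)/Real.sqrt m ∈ Set.Ioo (x/2) (x+1) :=
      h1.eventually (Ioo_mem_nhds (by linarith) (by linarith))
    have hev2 : ∀ᶠ m : ℕ in atTop, max (x+1) (2/x) < Real.sqrt m :=
      hsq.eventually_gt_atTop _
    filter_upwards [hev1, hev2, eventually_ge_atTop 1] with m hm1 hm2 hm3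
    have hs0 : (0:ℝ) < Real.sqrt m :=
      lt_of_le_of_lt (le_trans (by positivity) (le_max_left (x+1) (2/x))) hm2
    have hk1 : (1:ℝ) < k m := by
      have h2 : 2/x ≤ Real.sqrt m := le_of_lt (lt_of_le_of_lt (le_max_right _ _) hm2)
      have := hm1.1  -- x/2 < k/√m
      have hgt : x/2 * Real.sqrt m < k m := by
        rw [lt_div_iff₀ hs0] at this; linarith [this]
      have : (1:ℝ) ≤ x/2 * Real.sqrt m := by
        have : x/2 * (2/x) = 1 := by field_simp
        nlinarith [this, h2, hx]
      linarith
    have hkm' : (k m : ℝ) < m := by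
      have := hm1.2  -- k/√m < x+1
      have hlt : (k m : ℝ) < (x+1) * Real.sqrt m := by
        rw [div_lt_iff₀ hs0] at this; linarith
      have h3 : x + 1 < Real.sqrt m := lt_of_le_of_lt (le_max_left _ _) hm2
      have : (x+1) * Real.sqrt m < Real.sqrt m * Real.sqrt m := by nlinarith
      rw [hmulself m] at this; linarith
    refine ⟨hm3, ?_, ?_⟩
    · exact_mod_cast Nat.one_le_cast.mpr (le_of_lt (by exact_mod_cast hk1))
    · exact_mod_cast hkm'
  -- the log-sum
  set S : ℕ → ℝ := fun m => ∑ j ∈ Finset.range (k m),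
    Real.log ((2*(m:ℝ)-2*j)/(2*(m:ℝ)-j)) with hSdef
  have hsum : ∀ m : ℕ, 1 ≤ k m → ∑ j ∈ Finset.range (k m), (j:ℝ)
      = (k m) * ((k m:ℝ)-1)/2 := by
    intro m h
    have h2 := Finset.sum_range_id_mul_two (k m)
    have hc := congrArg (Nat.cast : ℕ → ℝ) h2
    push_cast [Nat.cast_sub h] at hc
    linarith
  have hub : ∀ᶠ m : ℕ in atTop, S m ≤ -((k m:ℝ)*((k m:ℝ)-1)/m/4) := by
    filter_upwards [hev] with m hm
    obtain ⟨hm1, hk1, hkm'⟩ := hm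
    have hm0 : (0:ℝ) < m := by exact_mod_cast hm1
    have hKm : (k m : ℝ) ≤ m := by exact_mod_cast le_of_lt hkm'
    have step : ∀ j ∈ Finset.range (k m),
        Real.log ((2*(m:ℝ)-2*j)/(2*(m:ℝ)-j)) ≤ (j:ℝ) * (-(1/(2*(m:ℝ)))) := by
      intro j hj
      have hjk : (j:ℝ) < k m := by exact_mod_cast mem_range.mp hj
      have hj0 : (0:ℝ) ≤ j := by positivity
      have hjm : (j:ℝ) < m := lt_of_lt_of_le hjk hKm
      have hd1 : (0:ℝ) < 2*(m:ℝ)-2*j := by linarith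
      have hd2 : (0:ℝ) < 2*(m:ℝ)-j := by linarith
      have ht : (0:ℝ) < (2*(m:ℝ)-2*j)/(2*(m:ℝ)-j) := div_pos hd1 hd2
      have hlog := Real.log_le_sub_one_of_pos ht
      have heq : (2*(m:ℝ)-2*j)/(2*(m:ℝ)-j) - 1 = -((j:ℝ)/(2*(m:ℝ)-j)) := by
        field_simp
        ring
      have hmono : (j:ℝ)/(2*(m:ℝ)) ≤ (j:ℝ)/(2*(m:ℝ)-j) := by
        gcongr <;> linarith
      calc Real.log ((2*(m:ℝ)-2*j)/(2*(m:ℝ)-j))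
          ≤ (2*(m:ℝ)-2*j)/(2*(m:ℝ)-j) - 1 := hlog
        _ = -((j:ℝ)/(2*(m:ℝ)-j)) := heq
        _ ≤ -((j:ℝ)/(2*(m:ℝ))) := neg_le_neg hmono
        _ = (j:ℝ) * (-(1/(2*(m:ℝ)))) := by ring
    calc S m ≤ ∑ j ∈ Finset.range (k m), (j:ℝ) * (-(1/(2*(m:ℝ)))) :=
          Finset.sum_le_sum step
      _ = (∑ j ∈ Finset.range (k m), (j:ℝ)) * (-(1/(2*(m:ℝ)))) :=
          (Finset.sum_mul _ _ _).symm
      _ = -((k m:ℝ)*((k m:ℝ)-1)/m/4) := by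
          have hm' : (m:ℝ) ≠ 0 := ne_of_gt hm0
          rw [hsum m hk1]; field_simp; ring
  have hlb : ∀ᶠ m : ℕ in atTop,
      -(((k m:ℝ)*((k m:ℝ)-1)/m)/(4*(1-(k m:ℝ)/m))) ≤ S m := by
    filter_upwards [hev] with m hm
    obtain ⟨hm1, hk1, hkm'⟩ := hm
    have hm0 : (0:ℝ) < m := by exact_mod_cast hm1
    have hKm : (k m : ℝ) < m := by exact_mod_cast hkm'
    have step : ∀ j ∈ Finset.range (k m),
        (j:ℝ) * (-(1/(2*(m:ℝ)-2*(k m:ℝ)))) ≤ Real.log ((2*(m:ℝ)-2*j)/(2*(m:ℝ)-j)) := by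
      intro j hj
      have hjk : (j:ℝ) < k m := by exact_mod_cast mem_range.mp hj
      have hj0 : (0:ℝ) ≤ j := by positivity
      have hjm : (j:ℝ) < m := lt_of_lt_of_le hjk (le_of_lt hKm)
      have hd1 : (0:ℝ) < 2*(m:ℝ)-2*j := by linarith
      have hd2 : (0:ℝ) < 2*(m:ℝ)-j := by linarith
      have hd3 : (0:ℝ) < 2*(m:ℝ)-2*(k m:ℝ) := by linarith
      have ht : (0:ℝ) < (2*(m:ℝ)-2*j)/(2*(m:ℝ)-j) := div_pos hd1 hd2
      have hlog := Real.log_le_sub_one_of_pos (inv_pos.mpr ht)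
      rw [Real.log_inv] at hlog
      have htin : ((2*(m:ℝ)-2*j)/(2*(m:ℝ)-j))⁻¹ = (2*(m:ℝ)-j)/(2*(m:ℝ)-2*j) :=
        inv_div _ _
      rw [htin] at hlog
      have heq : 1 - (2*(m:ℝ)-j)/(2*(m:ℝ)-2*j) = -((j:ℝ)/(2*(m:ℝ)-2*j)) := by
        have hmj : (m:ℝ) - j ≠ 0 := (by linarith : (0:ℝ) < m - j).ne'
        field_simp
        ring
      have hmono : (j:ℝ)/(2*(m:ℝ)-2*j) ≤ (j:ℝ)/(2*(m:ℝ)-2*(k m:ℝ)) := by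
        gcongr <;> linarith
      calc (j:ℝ) * (-(1/(2*(m:ℝ)-2*(k m:ℝ))))
          = -((j:ℝ)/(2*(m:ℝ)-2*(k m:ℝ))) := by ring
        _ ≤ -((j:ℝ)/(2*(m:ℝ)-2*j)) := neg_le_neg hmono
        _ = 1 - (2*(m:ℝ)-j)/(2*(m:ℝ)-2*j) := heq.symm
        _ ≤ Real.log ((2*(m:ℝ)-2*j)/(2*(m:ℝ)-j)) := by linarith
    calc -(((k m:ℝ)*((k m:ℝ)-1)/m)/(4*(1-(k m:ℝ)/m)))
        = (∑ j ∈ Finset.range (k m), (j:ℝ)) * (-(1/(2*(m:ℝ)-2*(k m:ℝ)))) := by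
          rw [hsum m hk1]
          have hmK : (m:ℝ) - k m ≠ 0 := by intro h; nlinarith
          have hm' : (m:ℝ) ≠ 0 := ne_of_gt hm0
          have e : 1 - (k m:ℝ)/m = ((m:ℝ)-(k m))/m := by field_simp
          have hd3 : (2*(m:ℝ)-2*(k m:ℝ)) ≠ 0 := by intro h; apply hmK; linarith
          rw [e]
          field_simp
          ring
      _ = ∑ j ∈ Finset.range (k m), (j:ℝ) * (-(1/(2*(m:ℝ)-2*(k m:ℝ)))) :=
          Finset.sum_mul _ _ _
      _ ≤ S m := Finset.sum_le_sum step
  have hUlim : Tendsto (fun m : ℕ => -((k m:ℝ)*((k m:ℝ)-1)/m/4)) atTop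
      (nhds (-(x^2/4))) := (hkm2.div_const 4).neg
  have hLlim : Tendsto (fun m : ℕ => -(((k m:ℝ)*((k m:ℝ)-1)/m)/(4*(1-(k m:ℝ)/m))))
      atTop (nhds (-(x^2/4))) := by
    have hden : Tendsto (fun m : ℕ => 4*(1-(k m:ℝ)/m)) atTop (nhds 4) := by
      have h := ((tendsto_const_nhds (x := (1:ℝ))).sub hkm).const_mul (4:ℝ)
      simpa using h
    have h := (hkm2.div hden (by norm_num)).neg
    simpa using h
  have hSlim : Tendsto S atTop (nhds (-(x^2/4))) :=
    tendsto_of_tendsto_of_tendsto_of_le_of_le' hLlim hUlim hlb hub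
  have hexp : Tendsto (fun m : ℕ => Real.exp (S m)) atTop
      (nhds (Real.exp (-(x^2/4)))) := (Real.continuous_exp.tendsto _).comp hSlim
  have hA : Tendsto (fun m : ℕ => ((k m:ℝ)/Real.sqrt m) * (2 - (k m:ℝ)/m)⁻¹) atTop
      (nhds (x * (2:ℝ)⁻¹)) := by
    have h := h1.mul (((tendsto_const_nhds (x := (2:ℝ))).sub hkm).inv₀ (by norm_num))
    simpa using h
  have hfinal := hA.mul hexp
  have hval : x * (2:ℝ)⁻¹ * Real.exp (-(x^2/4)) = x/2 * Real.exp (-x^2/4) := by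
    rw [neg_div]; ring
  rw [hval] at hfinal
  refine hfinal.congr' ?_
  filter_upwards [hev] with m hm
  obtain ⟨hm1, hk1, hkm'⟩ := hm
  have hm0 : (0:ℝ) < m := by exact_mod_cast hm1
  have hKm : (k m:ℝ) < m := by exact_mod_cast hkm'
  have hs0 : (0:ℝ) < Real.sqrt m := Real.sqrt_pos.mpr hm0
  have hprod : ∏ j ∈ Finset.range (k m), ((2*(m:ℝ)-2*j)/(2*(m:ℝ)-j))
      = Real.exp (S m) := by
    rw [hSdef, Real.exp_sum]
    refine Finset.prod_congr rfl (fun j hj => ?_)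
    have hjk : (j:ℝ) < k m := by exact_mod_cast mem_range.mp hj
    have hj0 : (0:ℝ) ≤ j := by positivity
    have hd1 : (0:ℝ) < 2*(m:ℝ)-2*j := by nlinarith
    have hd2 : (0:ℝ) < 2*(m:ℝ)-j := by nlinarith
    exact (Real.exp_log (div_pos hd1 hd2)).symm
  rw [prod_form m (k m) hm1 (le_of_lt hkm'), hprod]
  have h2mk : (0:ℝ) < 2*(m:ℝ) - k m := by linarith
  have hms : Real.sqrt m * Real.sqrt m = m := hmulself m
  have key : ((k m:ℝ)/Real.sqrt m) * (2 - (k m:ℝ)/m)⁻¹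
      = Real.sqrt m * ((k m:ℝ)/(2*(m:ℝ) - k m)) := by
    have h2 : (2:ℝ) - (k m:ℝ)/m = (2*(m:ℝ) - k m)/m := by field_simp
    have hs : Real.sqrt m ≠ 0 := ne_of_gt hs0
    rw [h2, _root_.inv_div]
    have h2mk' : (m:ℝ)*2 - k m ≠ 0 := (by linarith : (0:ℝ) < m*2 - k m).ne'
    field_simp
    linear_combination hms.symm
  rw [key]
  ring

theorem stmt_17 :
    (∀ m k : ℕ, 1 ≤ m → 1 ≤ k → k ≤ m →
      ((2 ^ k * Nat.choose (2 * m - k) m : ℝ)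
          - 2 ^ (k + 1) * Nat.choose (2 * m - k - 1) m) / Nat.choose (2 * m) m
        = Wmmpmf m k) ∧
    (∀ x : ℝ, 0 < x → ∀ k : ℕ → ℕ,
      Tendsto (fun m : ℕ => (k m : ℝ) / Real.sqrt m) atTop (nhds x) →
      Tendsto (fun m : ℕ => Real.sqrt m * Wmmpmf m (k m)) atTop
        (nhds (x / 2 * Real.exp (-x ^ 2 / 4)))) := by
  exact ⟨fun m k hm hk1 hk => part1 m k hm hk1 hk, fun x hx k hk => part2 x hx k hk⟩
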